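/- Let P_m be a point set of F^m points in [0,1)^2. If P_m is strongly (m−k, k)-equidistributed in base φ for every integer 0 ≤ k ≤ m, then P_m is a (1,m,2)-net in base φ. -/

import Mathlib

open Finset

/-- `F m` denotes `F^m := F_{m+2}`, the Fibonacci numbers with shifted index,
so `F^{-2} = 0`, `F^{-1} = 1`, `F^0 = 1`, `F^1 = 2`, … (and `F^m = 0` for `m < -2`). -/
def F (m : ℤ) : ℕ := Nat.fib (m + 2).toNat

lemma F_pos (m : ℤ) (h : -2 < m) : 0 < F m := Nat.fib_pos.mpr (by omega)

/-- The set of indices of the `1` digits in the (unique) Zeckendorf representation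
`n = ∑_{j ∈ zeckSet n} F^j` (no two consecutive indices), computed greedily. -/
def zeckSet : ℕ → Finset ℕ
  | 0 => ∅
  | (n + 1) =>
      insert (Nat.findGreatest (fun i => F i ≤ n + 1) (n + 1))
        (zeckSet (n + 1 - F (Nat.findGreatest (fun i => F i ≤ n + 1) (n + 1))))
decreasing_by exact Nat.sub_lt (Nat.succ_pos n) (F_pos _ (by omega))

/-- The golden ratio `φ = (1 + √5)/2`. -/
noncomputable def phi : ℝ := (1 + Real.sqrt 5) / 2

/-- `|n|`, the zeroth Zeckendorf digit of `n`. -/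
def zd0 (n : ℕ) : ℕ := if 0 ∈ zeckSet n then 1 else 0

/-- `n‾ = ∑_j d_j φ^j`, the `n`-th whole number in base `φ`. -/
noncomputable def zbar (n : ℕ) : ℝ := ∑ j ∈ zeckSet n, phi ^ j

/-- `n ⊙ φ^k = ∑_j d_j F^{j+k}`, the Zeckendorf digit shift. -/
def zshift (n : ℕ) (k : ℤ) : ℕ := ∑ j ∈ zeckSet n, F (j + k)

/-- The `n`-th term of the van der Corput sequence in base φ:
`g_n = ∑_j d_j φ^(−j−1)` where `n = ∑_j d_j F^j` is the Zeckendorf representation. -/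
noncomputable def vdc (n : ℕ) : ℝ := ∑ j ∈ zeckSet n, phi ^ (-(j : ℤ) - 1)

/-- The number of points of the planar point set `P` lying in
`[c₁‾/φ^{k₁}, (c₁+1)‾/φ^{k₁}) × [c₂‾/φ^{k₂}, (c₂+1)‾/φ^{k₂})`. -/
noncomputable def cnt2 (N : ℕ) (P : Fin N → ℝ × ℝ) (k₁ k₂ c₁ c₂ : ℕ) : ℕ :=
  Nat.card {i : Fin N //
    (P i).1 ∈ Set.Ico (zbar c₁ / phi ^ k₁) (zbar (c₁ + 1) / phi ^ k₁) ∧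
    (P i).2 ∈ Set.Ico (zbar c₂ / phi ^ k₂) (zbar (c₂ + 1) / phi ^ k₂)}

/-- A planar point set `P` of `F^m` points is *(k₁,k₂)-equidistributed in base φ* if
every prime elementary `(k₁,k₂)`-interval (each `a_j < F^{k_j}` with first Zeckendorf
digit `d_1` of `a_j` equal to `0`) contains exactly `F^(m−|I|)` of its points, where
`|I| = (k₁ + |a₁|) + (k₂ + |a₂|)`. -/
def Equidistributed2 (m k₁ k₂ : ℕ) (P : Fin (F m) → ℝ × ℝ) : Prop :=
  ∀ a₁ a₂ : ℕ, a₁ < F k₁ → a₂ < F k₂ → 1 ∉ zeckSet a₁ → 1 ∉ zeckSet a₂ →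
    cnt2 (F m) P k₁ k₂ a₁ a₂ =
      F ((m : ℤ) - ((k₁ : ℤ) + (zd0 a₁ : ℤ)) - ((k₂ : ℤ) + (zd0 a₂ : ℤ)))

/-- `ρ(k₁,k₂) = k₁ + k₂ + #{j : k_j > 0}`. -/
def rho2 (k₁ k₂ : ℕ) : ℕ :=
  k₁ + k₂ + (if 0 < k₁ then 1 else 0) + (if 0 < k₂ then 1 else 0)

/-- A planar point set of `F^m` points is a *(t,m,2)-net in base φ* if it is
`(k₁,k₂)`-equidistributed for all `(k₁,k₂)` with `ρ(k₁,k₂) ≤ m+2−t`. -/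
def IsNet2 (t m : ℕ) (P : Fin (F m) → ℝ × ℝ) : Prop :=
  ∀ k₁ k₂ : ℕ, rho2 k₁ k₂ + t ≤ m + 2 → Equidistributed2 m k₁ k₂ P

/-- A planar point set `P` of `F^N` points is *strongly (m₁,m₂)-equidistributed in
base φ* if every interval `I` of the `(m₁,m₂)`-partition (all `a_j < F^{m_j}`) contains
exactly `F^(N−|I|)` of its points, where `|I| = (m₁ + |a₁|) + (m₂ + |a₂|)`. -/
def StronglyEquidistributed2 (N m₁ m₂ : ℕ) (P : Fin (F N) → ℝ × ℝ) : Prop :=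
  ∀ a₁ a₂ : ℕ, a₁ < F m₁ → a₂ < F m₂ →
    cnt2 (F N) P m₁ m₂ a₁ a₂ =
      F ((N : ℤ) - ((m₁ : ℤ) + (zd0 a₁ : ℤ)) - ((m₂ : ℤ) + (zd0 a₂ : ℤ)))

lemma F_nat (n : ℕ) : F n = Nat.fib (n + 2) := by
  have : ((n:ℤ) + 2).toNat = n + 2 := by omega
  simp only [F, this]

lemma F_one_le (n : ℕ) : 1 ≤ F n := F_pos n (by omega)

lemma F_int_rec (x : ℤ) (h : -1 ≤ x) : F (x + 1) = F x + F (x - 1) := by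
  rcases eq_or_lt_of_le h with h' | h'
  · rw [← h']; decide
  rcases eq_or_lt_of_le (show (0:ℤ) ≤ x by omega) with h'' | h''
  · rw [← h'']; decide
  obtain ⟨n, rfl⟩ : ∃ n : ℕ, x = (n:ℤ) + 1 := ⟨(x-1).toNat, by omega⟩
  have e0 : ((n:ℤ)+1) - 1 = ((n:ℕ):ℤ) := by ring
  have e1 : ((n:ℤ)+1+1) = ((n+2:ℕ):ℤ) := by push_cast; ring
  have e2 : ((n:ℤ)+1) = ((n+1:ℕ):ℤ) := by push_cast; ring
  rw [e0, e1, e2, F_nat, F_nat, F_nat]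
  rw [show n+2+2 = (n+2)+2 from rfl, Nat.fib_add_two]
  rw [show n+1+2 = n+2+1 from rfl]
  omega

lemma F_cast_succ (n : ℕ) : F ((n + 1 : ℕ)) = F ((n:ℤ) + 1) := by
  norm_cast

lemma F_strictMono : ∀ {a b : ℕ}, a < b → F a < F b := by
  have step : ∀ a : ℕ, F a < F ((a + 1 : ℕ)) := by
    intro a
    have h := F_int_rec (a:ℤ) (by omega)
    have h1 : 1 ≤ F ((a:ℤ) - 1) := F_pos _ (by omega)
    rw [F_cast_succ a]
    omega
  intro a b h
  induction b with
  | zero => omega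
  | succ b ih =>
    rcases Nat.lt_succ_iff_lt_or_eq.mp h with h' | h'
    · exact (ih h').trans (step b)
    · rw [h']; exact step b

lemma F_mono : ∀ {a b : ℕ}, a ≤ b → F a ≤ F b := by
  intro a b h
  rcases eq_or_lt_of_le h with rfl | h
  · rfl
  · exact (F_strictMono h).le

lemma F_ge_lin (n : ℕ) : n + 1 ≤ F n := by
  induction n with
  | zero => decide
  | succ n ih =>
    have := F_strictMono (Nat.lt_succ_self n)
    simp only [Nat.succ_eq_add_one] at this
    omega

lemma F_int_mono {a b : ℤ} (h : a ≤ b) : F a ≤ F b := by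
  unfold F
  exact Nat.fib_mono (by omega)

lemma F_nat_rec (g : ℕ) (h : 1 ≤ g) : F ((g + 1 : ℕ)) = F g + F ((g - 1 : ℕ)) := by
  obtain ⟨k, rfl⟩ : ∃ k, g = k + 1 := ⟨g - 1, by omega⟩
  have := F_int_rec ((k:ℤ) + 1) (by omega)
  have e1 : ((k:ℤ) + 1 + 1) = ((k + 1 + 1 : ℕ) : ℤ) := by push_cast; ring
  have e2 : ((k:ℤ) + 1) = ((k + 1 : ℕ) : ℤ) := by push_cast; ring
  have e3 : ((k:ℤ) + 1 - 1) = ((k : ℕ) : ℤ) := by push_cast; ring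
  rw [e3, e1, e2] at this
  simpa using this

def zg (n : ℕ) : ℕ := Nat.findGreatest (fun i => F i ≤ n) n

lemma zg_spec (n : ℕ) (h : 1 ≤ n) : F (zg n) ≤ n := by
  have h0 : F ((0:ℕ)) ≤ n := by
    have : F ((0:ℕ)) = 1 := by decide
    omega
  exact Nat.findGreatest_spec (P := fun i => F i ≤ n) (Nat.zero_le n) h0

lemma zg_lt_succ (n : ℕ) : n < F ((zg n + 1 : ℕ)) := by
  by_contra hF
  push_neg at hF
  have hb : zg n + 1 ≤ n := by
    have := F_ge_lin (zg n + 1)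
    omega
  exact Nat.findGreatest_is_greatest (Nat.lt_succ_self _) hb hF

lemma zeckSet_eq (n : ℕ) (h : 1 ≤ n) :
    zeckSet n = insert (zg n) (zeckSet (n - F (zg n))) := by
  obtain ⟨m, rfl⟩ : ∃ m, n = m + 1 := ⟨n - 1, by omega⟩
  rw [zeckSet]
  rfl

def Zeck (s : Finset ℕ) : Prop := ∀ i ∈ s, i + 1 ∉ s

lemma zeck_main (n : ℕ) :
    (∑ j ∈ zeckSet n, F j) = n ∧ (∀ j ∈ zeckSet n, F j ≤ n) ∧ Zeck (zeckSet n) := by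
  induction n using Nat.strong_induction_on with
  | _ n ih =>
  rcases Nat.eq_zero_or_pos n with rfl | hn
  · refine ⟨by simp [zeckSet], by simp [zeckSet], by simp [Zeck, zeckSet]⟩
  set g := zg n with hg
  have hFg : F g ≤ n := zg_spec n hn
  have hlt : n < F ((g + 1 : ℕ)) := zg_lt_succ n
  have h1 : 1 ≤ F g := F_one_le g
  have heq := zeckSet_eq n hn
  set r := n - F g with hrdef
  have hrn : r < n := by omega
  obtain ⟨hsum, hbd, hz⟩ := ih r hrn
  -- elements of zeckSet r are < g - 1
  have hsmall : ∀ j ∈ zeckSet r, j + 1 < g := by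
    intro j hj
    by_contra hc
    push_neg at hc
    -- g ≤ j + 1, so g - 1 ≤ j, so F (g-1) ≤ F j ≤ r
    have hFj : F j ≤ r := hbd j hj
    rcases Nat.eq_zero_or_pos g with hg0 | hg1
    · -- g = 0 : then n < F 1 = 2, n = 1, r = 0, zeckSet 0 = ∅
      rw [hg0] at hlt hFg
      have : n = 1 := by
        have : F ((0 + 1 : ℕ)) = 2 := by decide
        omega
      have : r = 0 := by omega
      rw [this] at hj
      simp [zeckSet] at hj
    · have hrec : F ((g + 1 : ℕ)) = F g + F ((g - 1 : ℕ)) := F_nat_rec g hg1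
      have : F ((g - 1 : ℕ)) ≤ F j := F_mono (by omega)
      omega
  have hgnot : g ∉ zeckSet r := by
    intro hmem
    have := hsmall g hmem
    omega
  constructor
  · rw [heq, Finset.sum_insert hgnot, hsum]
    omega
  constructor
  · intro j hj
    rw [heq] at hj
    rcases Finset.mem_insert.mp hj with rfl | hj
    · exact hFg
    · exact (hbd j hj).trans (by omega)
  · intro i hi
    rw [heq] at hi ⊢
    rcases Finset.mem_insert.mp hi with rfl | hi
    · intro hc
      rcases Finset.mem_insert.mp hc with h' | h'
      · omega
      · have := hsmall _ h'; omega
    · intro hc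
      rcases Finset.mem_insert.mp hc with h' | h'
      · have := hsmall _ hi; omega
      · exact hz i hi h'

lemma zeck_sum (n : ℕ) : (∑ j ∈ zeckSet n, F j) = n := (zeck_main n).1
lemma zeck_le {n : ℕ} : ∀ j ∈ zeckSet n, F j ≤ n := (zeck_main n).2.1
lemma zeck_zeck (n : ℕ) : Zeck (zeckSet n) := (zeck_main n).2.2

lemma zval_lt : ∀ k : ℕ, ∀ s : Finset ℕ, Zeck s → (∀ j ∈ s, j < k) → (∑ j ∈ s, F j) < F k := by
  intro k
  induction k using Nat.strong_induction_on with
  | _ k ih =>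
  intro s hZ hs
  rcases Nat.eq_zero_or_pos k with rfl | hk
  · have hse : s = ∅ := Finset.eq_empty_of_forall_notMem (fun j hj => by have := hs j hj; omega)
    rw [hse]
    simpa using F_pos 0 (by omega)
  obtain ⟨l, rfl⟩ : ∃ l, k = l + 1 := ⟨k - 1, by omega⟩
  by_cases hl : l ∈ s
  · have hZ' : Zeck (s.erase l) := fun i hi hc =>
      hZ i (Finset.mem_of_mem_erase hi) (Finset.mem_of_mem_erase hc)
    have hs' : ∀ j ∈ s.erase l, j < l - 1 := by
      intro j hj
      have h1 : j ≠ l := Finset.ne_of_mem_erase hj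
      have h2 : j < l + 1 := hs j (Finset.mem_of_mem_erase hj)
      have h3 : j + 1 ≠ l := by
        intro hc
        exact hZ j (Finset.mem_of_mem_erase hj) (hc ▸ hl)
      omega
    have ihs : (∑ j ∈ s.erase l, F j) < F ((l - 1 : ℕ)) := ih (l - 1) (by omega) _ hZ' hs'
    have hsum : (∑ j ∈ s, F j) = F l + ∑ j ∈ s.erase l, F j := by
      rw [← Finset.sum_erase_add s _ hl]; omega
    have hge : F l + F ((l - 1 : ℕ)) ≤ F ((l + 1 : ℕ)) := by
      rcases Nat.eq_zero_or_pos l with rfl | hl1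
      · decide
      · rw [F_nat_rec l hl1]
    omega
  · have : ∀ j ∈ s, j < l := by
      intro j hj
      have := hs j hj
      rcases Nat.lt_succ_iff_lt_or_eq.mp this with h' | rfl
      · exact h'
      · exact absurd hj hl
    exact (ih l (by omega) s hZ this).trans (F_strictMono (by omega))

lemma zeckSet_lt {n k : ℕ} (h : n < F k) : ∀ j ∈ zeckSet n, j < k := by
  intro j hj
  by_contra hc
  push_neg at hc
  have := F_mono hc
  have := zeck_le j hj
  omega

lemma zeckSet_val : ∀ N : ℕ, ∀ s : Finset ℕ, Zeck s → (∑ j ∈ s, F j) = N → zeckSet N = s := by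
  intro N
  induction N using Nat.strong_induction_on with
  | _ N ih =>
  intro s hZ hsum
  rcases s.eq_empty_or_nonempty with rfl | hne
  · simp at hsum
    rw [← hsum]
    simp [zeckSet]
  set M := s.max' hne with hM
  have hMs : M ∈ s := s.max'_mem hne
  have hFM : F M ≤ N := by
    rw [← hsum]
    exact Finset.single_le_sum (f := fun x : ℕ => F (x:ℤ)) (fun j _ => Nat.zero_le _) hMs
  have hN : 1 ≤ N := le_trans (F_one_le M) hFM
  have hlt : N < F ((M + 1 : ℕ)) := by
    rw [← hsum]
    exact zval_lt (M + 1) s hZ (fun j hj => Nat.lt_succ_of_le (s.le_max' j hj))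
  have hzg : zg N = M := by
    rw [zg, Nat.findGreatest_eq_iff]
    refine ⟨?_, fun _ => hFM, ?_⟩
    · have := F_ge_lin M
      omega
    · intro j hj hjN hFj
      have : F ((M + 1 : ℕ)) ≤ F j := F_mono (by omega)
      omega
  rw [zeckSet_eq N hN, hzg]
  have hF1 : 1 ≤ F M := F_one_le M
  have herase : (∑ j ∈ s.erase M, F j) = N - F M := by
    have h2 : (∑ j ∈ s.erase M, F j) + F M = ∑ j ∈ s, F j :=
      Finset.sum_erase_add s _ hMs
    omega
  have hZ' : Zeck (s.erase M) := fun i hi hc =>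
    hZ i (Finset.mem_of_mem_erase hi) (Finset.mem_of_mem_erase hc)
  rw [ih (N - F M) (by omega) _ hZ' herase]
  exact Finset.insert_erase hMs

lemma zeckSet_F (k : ℕ) : zeckSet (F k) = {k} := by
  apply zeckSet_val
  · intro i hi hc
    simp only [Finset.mem_singleton] at hi hc
    omega
  · simp


lemma sqrt5_pos : (0:ℝ) < Real.sqrt 5 := Real.sqrt_pos.mpr (by norm_num)

lemma one_lt_phi : (1:ℝ) < phi := by
  have h : (1:ℝ) < Real.sqrt 5 := by
    rw [show (1:ℝ) = Real.sqrt 1 by simp]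
    exact Real.sqrt_lt_sqrt (by norm_num) (by norm_num)
  rw [phi]; linarith

lemma phi_pos : (0:ℝ) < phi := lt_trans one_pos one_lt_phi

lemma phi_sq : phi ^ 2 = phi + 1 := by
  have h5 : Real.sqrt 5 ^ 2 = 5 := Real.sq_sqrt (by norm_num)
  rw [phi]
  ring_nf
  nlinarith [h5]

lemma F_cast_add (n k : ℕ) : F ((n + k : ℕ)) = F ((n:ℤ) + (k:ℤ)) := by norm_cast

lemma pow_sum_lt : ∀ k : ℕ, ∀ s : Finset ℕ, Zeck s → (∀ j ∈ s, j < k) →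
    (∑ j ∈ s, phi ^ j) < phi ^ k := by
  intro k
  induction k using Nat.strong_induction_on with
  | _ k ih =>
  intro s hZ hs
  rcases Nat.eq_zero_or_pos k with rfl | hk
  · have hse : s = ∅ := Finset.eq_empty_of_forall_notMem (fun j hj => by have := hs j hj; omega)
    rw [hse]
    simpa using one_pos.trans_le (le_refl (1:ℝ)) |>.le.lt_of_le (by positivity)
  obtain ⟨l, rfl⟩ : ∃ l, k = l + 1 := ⟨k - 1, by omega⟩
  have hphi := phi_pos
  by_cases hl : l ∈ s
  · have hZ' : Zeck (s.erase l) := fun i hi hc =>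
      hZ i (Finset.mem_of_mem_erase hi) (Finset.mem_of_mem_erase hc)
    have hs' : ∀ j ∈ s.erase l, j < l - 1 := by
      intro j hj
      have h1 : j ≠ l := Finset.ne_of_mem_erase hj
      have h2 : j < l + 1 := hs j (Finset.mem_of_mem_erase hj)
      have h3 : j + 1 ≠ l := by
        intro hc
        exact hZ j (Finset.mem_of_mem_erase hj) (hc ▸ hl)
      omega
    have ihs : (∑ j ∈ s.erase l, phi ^ j) < phi ^ (l - 1) := ih (l - 1) (by omega) _ hZ' hs'
    have hsum : (∑ j ∈ s, phi ^ j) = phi ^ l + ∑ j ∈ s.erase l, phi ^ j :=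
      (Finset.add_sum_erase s _ hl).symm
    rcases Nat.eq_zero_or_pos l with rfl | hl1
    · have he : s.erase 0 = ∅ :=
        Finset.eq_empty_of_forall_notMem (fun j hj => by have := hs' j hj; omega)
      rw [hsum, he]
      simpa using one_lt_phi
    · have hge : phi ^ l + phi ^ (l - 1) ≤ phi ^ (l + 1) := by
        obtain ⟨j, rfl⟩ : ∃ j, l = j + 1 := ⟨l - 1, by omega⟩
        have hh : phi ^ (j + 1 + 1) = phi ^ (j + 1) + phi ^ j := by
          have h2 : phi ^ (j + 1 + 1) = phi ^ j * phi ^ 2 := by ring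
          rw [h2, phi_sq]
          ring
        simp only [Nat.add_sub_cancel]
        linarith
      linarith
  · have hlt : ∀ j ∈ s, j < l := by
      intro j hj
      have := hs j hj
      rcases Nat.lt_succ_iff_lt_or_eq.mp this with h' | rfl
      · exact h'
      · exact absurd hj hl
    have := ih l (by omega) s hZ hlt
    have hll : phi ^ l < phi ^ (l + 1) := by
      calc phi ^ l = phi ^ l * 1 := by ring
      _ < phi ^ l * phi := by
          exact mul_lt_mul_of_pos_left one_lt_phi (by positivity)
      _ = phi ^ (l + 1) := by ring
    linarith

lemma zg_rest_lt (n : ℕ) (h : 1 ≤ n) : ∀ j ∈ zeckSet (n - F (zg n)), j + 1 < zg n := by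
  intro j hj
  have hFg : F (zg n) ≤ n := zg_spec n h
  have hlt : n < F ((zg n + 1 : ℕ)) := zg_lt_succ n
  have hFj : F j ≤ n - F (zg n) := zeck_le j hj
  rcases Nat.eq_zero_or_pos (zg n) with hg0 | hg1
  · rw [hg0] at hlt hFg
    have h2 : F ((0 + 1 : ℕ)) = 2 := by decide
    have h0 : F ((0:ℕ)) = 1 := by decide
    have hn1 : n = 1 := by omega
    rw [hg0, h0] at hFj
    have := F_one_le j
    omega
  · have hrec : F ((zg n + 1 : ℕ)) = F (zg n) + F ((zg n - 1 : ℕ)) := F_nat_rec _ hg1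
    by_contra hc
    push_neg at hc
    have : F ((zg n - 1 : ℕ)) ≤ F j := F_mono (by omega)
    omega

lemma zg_notmem_rest (n : ℕ) (h : 1 ≤ n) : zg n ∉ zeckSet (n - F (zg n)) := by
  intro hmem
  have := zg_rest_lt n h _ hmem
  omega

lemma zbar_decomp (n : ℕ) (h : 1 ≤ n) :
    zbar n = phi ^ (zg n) + zbar (n - F (zg n)) := by
  rw [zbar, zeckSet_eq n h, Finset.sum_insert (zg_notmem_rest n h)]
  rfl

lemma zshift_decomp (n : ℕ) (h : 1 ≤ n) (d : ℤ) :
    zshift n d = F ((zg n : ℤ) + d) + zshift (n - F (zg n)) d := by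
  rw [zshift, zeckSet_eq n h, Finset.sum_insert (zg_notmem_rest n h)]
  rfl

lemma zbar_nonneg (n : ℕ) : 0 ≤ zbar n := by
  apply Finset.sum_nonneg
  intro j _
  exact pow_nonneg phi_pos.le j

lemma zeckSet_zero : zeckSet 0 = ∅ := by simp [zeckSet]

lemma zbar_zero : zbar 0 = 0 := by simp [zbar, zeckSet_zero]

lemma zshift_zero_left (d : ℤ) : zshift 0 d = 0 := by simp [zshift, zeckSet_zero]

lemma zg_lt_of_lt {a b : ℕ} (ha : 1 ≤ a) (hab : a < b) : zg a ≤ zg b := by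
  by_contra hc
  push_neg at hc
  have h1 : F (zg a) ≤ a := zg_spec a ha
  have h2 : b < F ((zg b + 1 : ℕ)) := zg_lt_succ b
  have h3 : F ((zg b + 1 : ℕ)) ≤ F (zg a) := F_mono (by omega)
  omega

lemma zbar_strictMono : ∀ b a : ℕ, a < b → zbar a < zbar b := by
  intro b
  induction b using Nat.strong_induction_on with
  | _ b ih =>
  intro a hab
  have hb : 1 ≤ b := by omega
  have hdb := zbar_decomp b hb
  have hnn := zbar_nonneg (b - F (zg b))
  have hpow : (0:ℝ) < phi ^ (zg b) := pow_pos phi_pos _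
  rcases Nat.eq_zero_or_pos a with rfl | ha
  · rw [zbar_zero, hdb]
    linarith
  rcases lt_or_eq_of_le (zg_lt_of_lt ha hab) with hgg | hgg
  · have h1 : zbar a < phi ^ (zg a + 1) := by
      rw [zbar]
      exact pow_sum_lt _ _ (zeck_zeck a) (zeckSet_lt (zg_lt_succ a))
    have h2 : phi ^ (zg a + 1) ≤ phi ^ (zg b) :=
      pow_le_pow_right₀ one_lt_phi.le (by omega)
    rw [hdb]
    linarith
  · have hda := zbar_decomp a ha
    have hFa : F (zg a) ≤ a := zg_spec a ha
    have hrec : zbar (a - F (zg a)) < zbar (b - F (zg b)) := by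
      apply ih (b - F (zg b)) (by have := F_one_le (zg b); omega)
      rw [← hgg]
      omega
    rw [hgg] at hda hrec
    rw [hda, hdb]
    linarith

lemma zbar_mono {a b : ℕ} (h : a ≤ b) : zbar a ≤ zbar b := by
  rcases lt_or_eq_of_le h with h | rfl
  · exact (zbar_strictMono b a h).le
  · rfl

lemma zeckSet_zshift (n d : ℕ) : zeckSet (zshift n (d:ℤ)) = (zeckSet n).image (· + d) := by
  apply zeckSet_val
  · intro i hi hc
    simp only [Finset.mem_image] at hi hc
    obtain ⟨x, hx, rfl⟩ := hi
    obtain ⟨y, hy, hyx⟩ := hc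
    have : y = x + 1 := by omega
    exact zeck_zeck n x hx (this ▸ hy)
  · rw [Finset.sum_image (by intro x _ y _ h; simp only at h; omega)]
    rw [zshift]
    apply Finset.sum_congr rfl
    intro j _
    rw [F_cast_add]

lemma zbar_zshift (n d : ℕ) : zbar (zshift n (d:ℤ)) = phi ^ d * zbar n := by
  rw [zbar, zeckSet_zshift, Finset.sum_image (by intro x _ y _ h; simp only at h; omega), zbar,
    Finset.mul_sum]
  apply Finset.sum_congr rfl
  intro j _
  rw [pow_add]
  ring

lemma zshift_zero_right (n : ℕ) : zshift n 0 = n := by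
  rw [zshift]
  have : ∀ j ∈ zeckSet n, F ((j:ℤ) + 0) = F j := by intro j _; norm_num
  rw [Finset.sum_congr rfl this]
  exact zeck_sum n

lemma zshift_strictMono (d : ℕ) : ∀ b a : ℕ, a < b → zshift a (d:ℤ) < zshift b (d:ℤ) := by
  intro b
  induction b using Nat.strong_induction_on with
  | _ b ih =>
  intro a hab
  have hb : 1 ≤ b := by omega
  have hdb := zshift_decomp b hb d
  rcases Nat.eq_zero_or_pos a with rfl | ha
  · rw [zshift_zero_left, hdb]
    have : 1 ≤ F ((zg b : ℤ) + d) := F_pos _ (by omega)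
    omega
  rcases lt_or_eq_of_le (zg_lt_of_lt ha hab) with hgg | hgg
  · have h1 : zshift a (d:ℤ) < F ((zg a + 1 + d : ℕ)) := by
      have hsum : zshift a (d:ℤ) = ∑ j ∈ zeckSet (zshift a (d:ℤ)), F j := (zeck_sum _).symm
      rw [hsum]
      apply zval_lt _ _ (zeck_zeck _)
      intro j hj
      rw [zeckSet_zshift] at hj
      simp only [Finset.mem_image] at hj
      obtain ⟨x, hx, rfl⟩ := hj
      have := zeckSet_lt (zg_lt_succ a) x hx
      omega
    have h2 : F ((zg a + 1 + d : ℕ)) ≤ F ((zg b + d : ℕ)) := F_mono (by omega)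
    have h3 : F ((zg b + d : ℕ)) = F ((zg b : ℤ) + d) := by
      rw [F_cast_add]
    omega
  · have hda := zshift_decomp a ha d
    have hFa : F (zg a) ≤ a := zg_spec a ha
    have hrec : zshift (a - F (zg a)) (d:ℤ) < zshift (b - F (zg b)) (d:ℤ) := by
      apply ih (b - F (zg b)) (by have := F_one_le (zg b); omega)
      rw [← hgg]
      omega
    rw [hgg] at hda hrec
    rw [hda, hdb]
    omega

lemma zshift_mono (d : ℕ) {a b : ℕ} (h : a ≤ b) : zshift a (d:ℤ) ≤ zshift b (d:ℤ) := by
  rcases lt_or_eq_of_le h with h | rfl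
  · exact (zshift_strictMono d b a h).le
  · rfl

lemma zd0_le_one (n : ℕ) : zd0 n ≤ 1 := by
  rw [zd0]; split <;> omega

lemma zd0_zero : zd0 0 = 0 := by simp [zd0, zeckSet_zero]

lemma zeckSet_one : zeckSet 1 = {0} := by
  have h : (1:ℕ) = F ((0:ℕ)) := by decide
  rw [h, zeckSet_F]

lemma zd0_one : zd0 1 = 1 := by simp [zd0, zeckSet_one]

lemma zshift_F (k d : ℕ) : zshift (F k) (d:ℤ) = F ((k:ℤ) + d) := by
  rw [zshift, zeckSet_F, Finset.sum_singleton]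

lemma zd0_eq_rest (n : ℕ) (h : 1 ≤ n) (hg : 1 ≤ zg n) : zd0 n = zd0 (n - F (zg n)) := by
  rw [zd0, zd0, zeckSet_eq n h]
  simp only [Finset.mem_insert]
  have : ¬ (0 = zg n) := by omega
  simp [this]

lemma zg_eq_of (n g : ℕ) (h1 : F g ≤ n) (h2 : n < F ((g + 1:ℕ))) : zg n = g := by
  rw [zg, Nat.findGreatest_eq_iff]
  refine ⟨?_, fun _ => h1, ?_⟩
  · have := F_ge_lin g; omega
  · intro j hj hjn hFj
    have : F ((g + 1 : ℕ)) ≤ F j := F_mono (by omega)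
    omega

lemma zshift_succ : ∀ n : ℕ, ∀ d : ℕ, zshift (n + 1) (d:ℤ) = zshift n (d:ℤ) + F ((d:ℤ) - zd0 n) := by
  intro n
  induction n using Nat.strong_induction_on with
  | _ n ih =>
  intro d
  rcases Nat.eq_zero_or_pos n with rfl | hn
  · rw [zshift_zero_left, zd0_zero]
    rw [show (0:ℕ) + 1 = 1 from rfl, zshift, zeckSet_one, Finset.sum_singleton]
    simp
  set g := zg (n + 1) with hgdef
  have hFg : F g ≤ n + 1 := zg_spec (n+1) (by omega)
  have hlt : n + 1 < F ((g + 1 : ℕ)) := zg_lt_succ (n+1)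
  rcases Nat.lt_or_ge n (F g) with heq | hle
  · -- F g = n + 1
    have heq : F g = n + 1 := by omega
    have hzs : zshift (n + 1) (d:ℤ) = F ((g:ℤ) + d) := by
      rw [← heq, zshift_F]
    rcases Nat.lt_or_ge g 2 with hg2 | hg2
    · -- g = 1 (g = 0 gives n = 0, excluded)
      have hg1 : g = 1 := by
        have : g = 0 ∨ g = 1 := by omega
        rcases this with h0 | h1
        · rw [h0] at heq
          have : F ((0:ℕ)) = 1 := by decide
          omega
        · exact h1
      have hn1 : n = 1 := by
        rw [hg1] at heq
        have : F ((1:ℕ)) = 2 := by decide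
        omega
      subst hn1
      rw [hzs, hg1, zd0_one]
      rw [show ((1:ℕ)+1 : ℕ) = 2 from rfl] at *
      rw [zshift, zeckSet_one, Finset.sum_singleton]
      have hrec := F_int_rec (d:ℤ) (by omega)
      have e1 : ((1:ℕ):ℤ) + d = (d:ℤ) + 1 := by ring
      have e2 : ((0:ℕ):ℤ) + d = (d:ℤ) := by simp
      rw [e1, e2]
      simp only [Nat.cast_one]
      omega
    · -- g ≥ 2
      have hrec2 : F g = F ((g - 1 : ℕ)) + F ((g - 2 : ℕ)) := by
        have := F_nat_rec (g-1) (by omega)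
        rw [show g - 1 + 1 = g by omega] at this
        rw [this, show g - 1 - 1 = g - 2 by omega]
      have hF2pos : 1 ≤ F ((g - 2 : ℕ)) := F_one_le _
      have hF1pos : 1 ≤ F ((g - 1 : ℕ)) := F_one_le _
      have hzgn : zg n = g - 1 := by
        apply zg_eq_of
        · omega
        · rw [show g - 1 + 1 = g by omega]; omega
      have hdn := zshift_decomp n hn (d:ℤ)
      rw [hzgn] at hdn
      have hrest : n - F ((g - 1 : ℕ)) = F ((g - 2 : ℕ)) - 1 := by omega
      rw [hrest] at hdn
      have hzd : zd0 n = zd0 (F ((g - 2 : ℕ)) - 1) := by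
        have := zd0_eq_rest n hn (by rw [hzgn]; omega)
        rw [hzgn, hrest] at this
        exact this
      have hihn : F ((g - 2 : ℕ)) - 1 < n := by
        have : F ((g - 2 : ℕ)) < F g := F_strictMono (by omega)
        omega
      have hih := ih (F ((g - 2 : ℕ)) - 1) hihn d
      rw [show F ((g - 2:ℕ)) - 1 + 1 = F ((g - 2:ℕ)) by omega, zshift_F] at hih
      rw [hzs, hdn, hzd]
      rw [← hzd] at hih ⊢
      -- goal : F (g + d) = (F ((g-1)+d) + zshift (F (g-2) - 1) d) + F (d - zd0 n)
      have hfin : F ((g:ℤ) + d) = F (((g-1:ℕ):ℤ) + d) + F (((g-2:ℕ):ℤ) + d) := by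
        have := F_int_rec (((g-1:ℕ):ℤ) + d) (by omega)
        rw [show ((g-1:ℕ):ℤ) + d + 1 = (g:ℤ) + d by push_cast; omega,
          show ((g-1:ℕ):ℤ) + d - 1 = ((g-2:ℕ):ℤ) + d by push_cast; omega] at this
        exact this
      omega
  · -- F g ≤ n : recurse
    have hg1 : 1 ≤ g := by
      by_contra hc
      push_neg at hc
      have hg0 : g = 0 := by omega
      rw [hg0] at hle hlt
      have h0 : F ((0:ℕ)) = 1 := by decide
      have h1 : F ((0+1:ℕ)) = 2 := by decide
      omega
    have hzgn : zg n = g := zg_eq_of n g hle (by omega)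
    have hd1 := zshift_decomp (n+1) (by omega) (d:ℤ)
    have hd2 := zshift_decomp n hn (d:ℤ)
    rw [← hgdef] at hd1
    rw [hzgn] at hd2
    have hzd : zd0 n = zd0 (n - F g) := by
      have := zd0_eq_rest n hn (by rw [hzgn]; omega)
      rw [hzgn] at this
      exact this
    have hih := ih (n - F g) (by have := F_one_le g; omega) d
    rw [show n - F g + 1 = n + 1 - F g by omega] at hih
    rw [hd1, hd2, hzd]
    omega

lemma zeck_union {A B : Finset ℕ} (hA : Zeck A) (hB : Zeck B)
    (hgap : ∀ i ∈ B, ∀ j ∈ A, i + 2 ≤ j) : Zeck (A ∪ B) := by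
  intro i hi hc
  rcases Finset.mem_union.mp hi with hiA | hiB
  · rcases Finset.mem_union.mp hc with hcA | hcB
    · exact hA i hiA hcA
    · have := hgap (i+1) hcB i hiA
      omega
  · rcases Finset.mem_union.mp hc with hcA | hcB
    · have := hgap i hiB (i+1) hcA
      omega
    · exact hB i hiB hcB

lemma zeckSet_concat (a d c : ℕ) (hd : 1 ≤ d) (hc : c < F ((d:ℤ) - zd0 a)) :
    zeckSet (zshift a (d:ℤ) + c) = (zeckSet a).image (· + d) ∪ zeckSet c := by
  have hzd := zd0_le_one a
  have hcast : ((d:ℤ) - zd0 a) = ((d - zd0 a : ℕ) : ℤ) := by push_cast; omega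
  rw [hcast] at hc
  have hB : ∀ i ∈ zeckSet c, i < d - zd0 a := zeckSet_lt hc
  have hgap : ∀ i ∈ zeckSet c, ∀ j ∈ (zeckSet a).image (· + d), i + 2 ≤ j := by
    intro i hi j hj
    simp only [Finset.mem_image] at hj
    obtain ⟨x, hx, rfl⟩ := hj
    have hi' := hB i hi
    rcases Nat.eq_zero_or_pos (zd0 a) with h0 | h1
    · -- zd0 a = 0 : x ≥ 1
      have hx1 : 1 ≤ x := by
        by_contra hxc
        push_neg at hxc
        have hx0 : x = 0 := by omega
        rw [hx0] at hx
        rw [zd0, if_pos hx] at h0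
        omega
      omega
    · have : zd0 a = 1 := by omega
      rw [this] at hi'
      omega
  have hZA : Zeck ((zeckSet a).image (· + d)) := by
    rw [← zeckSet_zshift]
    exact zeck_zeck _
  have hZU : Zeck ((zeckSet a).image (· + d) ∪ zeckSet c) :=
    zeck_union hZA (zeck_zeck c) hgap
  have hdisj : Disjoint ((zeckSet a).image (· + d)) (zeckSet c) := by
    rw [Finset.disjoint_right]
    intro i hi hiA
    have := hgap i hi i hiA
    omega
  apply zeckSet_val
  · exact hZU
  · rw [Finset.sum_union hdisj]
    congr 1
    · rw [← zeckSet_zshift]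
      exact zeck_sum _
    · exact zeck_sum c

lemma zd0_concat (a d c : ℕ) (hd : 1 ≤ d) (hc : c < F ((d:ℤ) - zd0 a)) :
    zd0 (zshift a (d:ℤ) + c) = zd0 c := by
  rw [zd0, zd0, zeckSet_concat a d c hd hc]
  have : (0 ∈ (zeckSet a).image (· + d) ∪ zeckSet c) ↔ 0 ∈ zeckSet c := by
    simp only [Finset.mem_union, Finset.mem_image]
    constructor
    · rintro (⟨x, _, hx⟩ | h)
      · omega
      · exact h
    · intro h; exact Or.inr h
  simp only [this]

lemma sum_range_add {M : Type*} [AddCommMonoid M] (f : ℕ → M) (a b : ℕ) :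
    ∑ i ∈ Finset.range (a + b), f i = (∑ i ∈ Finset.range a, f i) + ∑ i ∈ Finset.range b, f (a + i) := by
  induction b with
  | zero => simp
  | succ b ihb =>
    rw [show a + (b + 1) = (a + b) + 1 from rfl, Finset.sum_range_succ, ihb,
      Finset.sum_range_succ]
    rw [add_assoc]

lemma sum_zd0 : ∀ K : ℕ, (∑ c ∈ Finset.range (F K), zd0 c) = F ((K:ℤ) - 2) := by
  intro K
  induction K using Nat.strong_induction_on with
  | _ K ih =>
  rcases Nat.lt_or_ge K 2 with hK | hK
  · have : K = 0 ∨ K = 1 := by omega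
    rcases this with rfl | rfl
    · rw [show F ((0:ℕ)) = 1 by decide]
      rw [Finset.sum_range_one, zd0_zero]
      decide
    · rw [show F ((1:ℕ)) = 2 by decide]
      rw [Finset.sum_range_succ, Finset.sum_range_one, zd0_zero, zd0_one]
      decide
  · obtain ⟨L, rfl⟩ : ∃ L, K = L + 2 := ⟨K - 2, by omega⟩
    have hsplit : F ((L + 2 : ℕ)) = F ((L + 1 : ℕ)) + F ((L : ℕ)) := by
      have := F_nat_rec (L + 1) (by omega)
      exact this
    rw [hsplit, _root_.sum_range_add]
    have hshift : ∀ i ∈ Finset.range (F (L:ℕ)), zd0 (F ((L+1:ℕ)) + i) = zd0 i := by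
      intro i hi
      simp only [Finset.mem_range] at hi
      have h1 : zshift 1 ((L+1 : ℕ):ℤ) = F ((L+1:ℕ)) := by
        rw [zshift, zeckSet_one, Finset.sum_singleton]
        congr 1
        push_cast
        ring
      rw [← h1]
      apply zd0_concat 1 (L+1) i (by omega)
      rw [zd0_one]
      have : ((L + 1 : ℕ):ℤ) - (1:ℕ) = (L:ℤ) := by push_cast; ring
      rw [this]
      exact hi
    rw [Finset.sum_congr rfl hshift]
    rw [ih (L+1) (by omega), ih L (by omega)]
    have hrec := F_int_rec ((L:ℤ) - 1) (by omega)
    have e1 : ((L:ℤ) - 1) + 1 = ((L + 2 : ℕ):ℤ) - 2 := by push_cast; ring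
    have e2 : ((L:ℤ) - 1) - 1 = (L:ℤ) - 2 := by ring
    have e3 : ((L:ℤ) - 1) = ((L + 1 : ℕ):ℤ) - 2 := by push_cast; ring
    rw [e1, e2, e3] at hrec
    omega

lemma sum_F_zd0 (K : ℕ) (e₁ : ℕ) (he : e₁ ≤ 1) :
    (∑ c ∈ Finset.range (F K), F (-(e₁:ℤ) - zd0 c)) = F ((K:ℤ) - e₁) := by
  rcases Nat.le_one_iff_eq_zero_or_eq_one.mp he with rfl | rfl
  · have hterm : ∀ c ∈ Finset.range (F K), F (-((0:ℕ):ℤ) - zd0 c) = 1 := by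
      intro c _
      rcases Nat.le_one_iff_eq_zero_or_eq_one.mp (zd0_le_one c) with h | h <;>
        rw [h] <;> decide
    rw [Finset.sum_congr rfl hterm]
    simp
  · have hterm : ∀ c ∈ Finset.range (F K), F (-((1:ℕ):ℤ) - zd0 c) + zd0 c = 1 := by
      intro c _
      rcases Nat.le_one_iff_eq_zero_or_eq_one.mp (zd0_le_one c) with h | h <;>
        rw [h] <;> decide
    have hsum : (∑ c ∈ Finset.range (F K), (F (-((1:ℕ):ℤ) - zd0 c) + zd0 c)) = F K := by
      rw [Finset.sum_congr rfl hterm]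
      simp
    rw [Finset.sum_add_distrib, sum_zd0 K] at hsum
    have hrec := F_int_rec ((K:ℤ) - 1) (by omega)
    have e1 : ((K:ℤ) - 1) + 1 = ((K:ℕ):ℤ) := by push_cast; ring
    have e2 : ((K:ℤ) - 1) - 1 = (K:ℤ) - 2 := by ring
    rw [e1, e2] at hrec
    have e3 : ((K:ℤ) - ((1:ℕ):ℤ)) = (K:ℤ) - 1 := by push_cast; ring
    rw [e3]
    omega


noncomputable def cntY (N : ℕ) (P : Fin N → ℝ × ℝ) (k₁ c₁ : ℕ) (B C : ℝ) : ℕ :=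
  Nat.card {i : Fin N //
    (P i).1 ∈ Set.Ico (zbar c₁ / phi ^ k₁) (zbar (c₁ + 1) / phi ^ k₁) ∧
    (P i).2 ∈ Set.Ico B C}

lemma cnt2_eq_cntY (N : ℕ) (P : Fin N → ℝ × ℝ) (k₁ k₂ c₁ c₂ : ℕ) :
    cnt2 N P k₁ k₂ c₁ c₂ = cntY N P k₁ c₁ (zbar c₂ / phi ^ k₂) (zbar (c₂ + 1) / phi ^ k₂) := rfl

lemma cntY_card (N : ℕ) (P : Fin N → ℝ × ℝ) (k₁ c₁ : ℕ) (B C : ℝ) :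
    cntY N P k₁ c₁ B C =
      (Finset.univ.filter (fun i : Fin N =>
        (P i).1 ∈ Set.Ico (zbar c₁ / phi ^ k₁) (zbar (c₁ + 1) / phi ^ k₁) ∧
        (P i).2 ∈ Set.Ico B C)).card := by
  classical
  rw [cntY, Nat.card_eq_fintype_card, Fintype.card_subtype]

lemma cntY_zero (N : ℕ) (P : Fin N → ℝ × ℝ) (k₁ c₁ : ℕ) (B C : ℝ) (h : C ≤ B) :
    cntY N P k₁ c₁ B C = 0 := by
  classical
  rw [cntY_card, Finset.card_eq_zero]
  apply Finset.filter_false_of_mem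
  intro i _
  rintro ⟨_, hy⟩
  rw [Set.mem_Ico] at hy
  linarith [hy.1, hy.2]

lemma cntY_split (N : ℕ) (P : Fin N → ℝ × ℝ) (k₁ c₁ : ℕ) (B₁ B₂ B₃ : ℝ)
    (h12 : B₁ ≤ B₂) (h23 : B₂ ≤ B₃) :
    cntY N P k₁ c₁ B₁ B₃ = cntY N P k₁ c₁ B₁ B₂ + cntY N P k₁ c₁ B₂ B₃ := by
  classical
  rw [cntY_card, cntY_card, cntY_card]
  rw [← Finset.card_union_of_disjoint ?hd]
  case hd =>
    rw [Finset.disjoint_left]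
    intro i hi hi'
    simp only [Finset.mem_filter, Set.mem_Ico] at hi hi'
    linarith [hi.2.2.2, hi'.2.2.1]
  congr 1
  rw [← Finset.filter_or]
  apply Finset.filter_congr
  intro i _
  simp only [Set.mem_Ico]
  constructor
  · rintro ⟨hq, hy1, hy3⟩
    rcases lt_or_ge (P i).2 B₂ with h | h
    · exact Or.inl ⟨hq, hy1, h⟩
    · exact Or.inr ⟨hq, h, hy3⟩
  · rintro (⟨hq, hy1, hy2⟩ | ⟨hq, hy2, hy3⟩)
    · exact ⟨hq, hy1, by linarith⟩
    · exact ⟨hq, by linarith, hy3⟩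

lemma cntY_telescope (N : ℕ) (P : Fin N → ℝ × ℝ) (k₁ c₁ : ℕ) (f : ℕ → ℝ)
    (hf : ∀ i, f i ≤ f (i + 1)) (L : ℕ) :
    ∀ n : ℕ, cntY N P k₁ c₁ (f L) (f (L + n)) =
      ∑ i ∈ Finset.range n, cntY N P k₁ c₁ (f (L + i)) (f (L + i + 1)) := by
  have hmono : ∀ a b : ℕ, a ≤ b → f a ≤ f b := by
    intro a b hab
    induction b with
    | zero => simp_all
    | succ b ihb =>
      rcases Nat.lt_succ_iff_lt_or_eq.mp (Nat.lt_succ_of_le hab) with h | rfl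
      · exact (ihb (by omega)).trans (hf b)
      · rfl
  intro n
  induction n with
  | zero =>
    simp only [Nat.add_zero, Finset.range_zero, Finset.sum_empty]
    exact cntY_zero _ _ _ _ _ _ le_rfl
  | succ n ihn =>
    rw [Finset.sum_range_succ, ← ihn, show L + (n+1) = (L + n) + 1 from rfl]
    exact cntY_split N P k₁ c₁ (f L) (f (L + n)) (f (L + n + 1))
      (hmono _ _ (by omega)) (hf (L + n))


/-- If a point set `P` of `F^m` points in `[0,1)^2` is strongly
`(m−k,k)`-equidistributed in base φ for every `0 ≤ k ≤ m`, then `P` is a `(1,m,2)`-net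
in base φ. -/
theorem statement14 (m : ℕ) (P : Fin (F m) → ℝ × ℝ)
    (hP : ∀ i, (P i).1 ∈ Set.Ico (0 : ℝ) 1 ∧ (P i).2 ∈ Set.Ico (0 : ℝ) 1)
    (h : ∀ k : ℕ, k ≤ m → StronglyEquidistributed2 m (m - k) k P) :
    IsNet2 1 m P := by
  intro k₁ k₂ hrho
  intro a₁ a₂ ha₁ ha₂ _ _
  rw [rho2] at hrho
  have he₁ : zd0 a₁ ≤ 1 := zd0_le_one a₁
  have he₂ : zd0 a₂ ≤ 1 := zd0_le_one a₂
  -- basic inequalities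
  have hF0 : F ((0:ℕ)) = 1 := by decide
  have hk₁m : k₁ ≤ m := by
    rcases Nat.eq_zero_or_pos k₁ with h0 | h1
    · split_ifs at hrho <;> omega
    · rw [if_pos h1] at hrho
      split_ifs at hrho <;> omega
  have hk₁₂ : k₁ + k₂ ≤ m := by
    rcases Nat.eq_zero_or_pos k₂ with h0 | h1
    · omega
    · rw [if_pos h1] at hrho
      split_ifs at hrho <;> omega
  set d : ℕ := m - k₁ - k₂ with hd
  have hMk : m - k₁ = k₂ + d := by omega
  have hstrong := h (m - k₁) (by omega)
  rw [show m - (m - k₁) = k₁ by omega, hMk] at hstrong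
  rcases Nat.eq_zero_or_pos d with hd0 | hd1
  · rw [hd0] at hstrong
    have := hstrong a₁ a₂ ha₁ ha₂
    rw [show k₂ + 0 = k₂ by omega] at this
    exact this
  -- main case : d ≥ 1
  set L : ℕ := zshift a₂ (d:ℤ) with hL
  have hcastd : ((d:ℤ) - zd0 a₂) = ((d - zd0 a₂ : ℕ) : ℤ) := by push_cast; omega
  set K : ℕ := F ((d - zd0 a₂ : ℕ)) with hK
  have hL4 : zshift (a₂ + 1) (d:ℤ) = L + K := by
    rw [zshift_succ a₂ d, hcastd]
  -- bound : L + i < F (k₂ + d) for i < K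
  have hRbound : L + K ≤ F ((k₂ + d : ℕ)) := by
    rw [← hL4]
    have h1 : zshift (a₂ + 1) (d:ℤ) ≤ zshift (F k₂) (d:ℤ) := zshift_mono d ha₂
    rw [zshift_F] at h1
    rw [F_cast_add]
    exact h1
  -- monotone endpoint function
  have hphipow : (0:ℝ) < phi ^ (k₂ + d) := pow_pos phi_pos _
  set f : ℕ → ℝ := fun b => zbar b / phi ^ (k₂ + d) with hf
  have hfmono : ∀ i : ℕ, f i ≤ f (i + 1) := by
    intro i
    rw [hf]
    simp only
    exact (div_le_div_iff_of_pos_right hphipow).mpr (zbar_mono (by omega))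
  -- endpoints
  have hfL : f L = zbar a₂ / phi ^ k₂ := by
    rw [hf]
    simp only
    rw [hL, zbar_zshift]
    rw [pow_add]
    have h1 : phi ^ k₂ ≠ 0 := ne_of_gt (pow_pos phi_pos _)
    have h2 : phi ^ d ≠ 0 := ne_of_gt (pow_pos phi_pos _)
    field_simp
  have hfR : f (L + K) = zbar (a₂ + 1) / phi ^ k₂ := by
    rw [hf]
    simp only
    rw [← hL4, zbar_zshift]
    rw [pow_add]
    have h1 : phi ^ k₂ ≠ 0 := ne_of_gt (pow_pos phi_pos _)
    have h2 : phi ^ d ≠ 0 := ne_of_gt (pow_pos phi_pos _)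
    field_simp
  -- telescoping
  have htel := cntY_telescope (F m) P k₁ a₁ f hfmono L K
  rw [hfL, hfR] at htel
  have hmain : cnt2 (F m) P k₁ k₂ a₁ a₂ =
      ∑ i ∈ Finset.range K, cnt2 (F m) P k₁ (k₂ + d) a₁ (L + i) := by
    rw [cnt2_eq_cntY, htel]
    apply Finset.sum_congr rfl
    intro i _
    rw [cnt2_eq_cntY]
  -- evaluate each term via strong equidistribution
  have hterm : ∀ i ∈ Finset.range K, cnt2 (F m) P k₁ (k₂ + d) a₁ (L + i) =
      F (-(zd0 a₁ : ℤ) - (zd0 i : ℤ)) := by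
    intro i hi
    simp only [Finset.mem_range] at hi
    have hb : L + i < F ((k₂ + d : ℕ)) := by omega
    have hzd0 : zd0 (L + i) = zd0 i := by
      rw [hL]
      apply zd0_concat a₂ d i hd1
      rw [hcastd]
      exact hi
    rw [hstrong a₁ (L + i) ha₁ hb, hzd0]
    congr 1
    push_cast
    omega
  rw [hmain, Finset.sum_congr rfl hterm, sum_F_zd0 _ _ he₁]
  congr 1
  push_cast
  omega
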